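/- The bijection τ(A)(X,Y,Z) = A(X,Y,Z) − A(Y,X,Z) maps 𝒜₁ onto 𝒯₁, 𝒜₂ onto 𝒯₂, and 𝒜₃ onto 𝒯₃ (with 𝒜ᵢ, 𝒯ᵢ as in Cartan's decompositions of connection and torsion tensors). -/
import Mathlib


/- Trilinear forms on the Euclidean space ℝ^5 = Fin 5 → ℝ are modelled as
functions E → E → E → ℝ together with the trilinearity predicate `IsTri`. -/

abbrev E := Fin 5 → ℝ

/-- The standard inner product of ℝ^5. -/
def dot (X Y : E) : ℝ := ∑ i : Fin 5, X i * Y i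

/-- The standard orthonormal basis e₁,…,e₅. -/
def bas (i : Fin 5) : E := Pi.single i 1

/-- Trilinearity of a map E → E → E → ℝ. -/
def IsTri (T : E → E → E → ℝ) : Prop :=
  (∀ a a' b c, T (a + a') b c = T a b c + T a' b c) ∧
  (∀ (r : ℝ) a b c, T (r • a) b c = r * T a b c) ∧
  (∀ a b b' c, T a (b + b') c = T a b c + T a b' c) ∧
  (∀ (r : ℝ) a b c, T a (r • b) c = r * T a b c) ∧
  (∀ a b c c', T a b (c + c') = T a b c + T a b c') ∧
  (∀ (r : ℝ) a b c, T a b (r • c) = r * T a b c)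

/-- 𝒯 = trilinear forms skew-symmetric in the first two arguments. -/
def TT : Set (E → E → E → ℝ) := {T | IsTri T ∧ ∀ X Y Z, T X Y Z = -T Y X Z}

/-- 𝒜 = trilinear forms skew-symmetric in the last two arguments. -/
def AA : Set (E → E → E → ℝ) := {A | IsTri A ∧ ∀ X Y Z, A X Y Z = -A X Z Y}

/-- τ(A)(X,Y,Z) = A(X,Y,Z) - A(Y,X,Z). -/
def tau (A : E → E → E → ℝ) : E → E → E → ℝ := fun X Y Z => A X Y Z - A Y X Z

/-- 𝒯₁: vectorial torsion. -/
def T1 : Set (E → E → E → ℝ) :=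
  {T | T ∈ TT ∧ ∃ α : E →ₗ[ℝ] ℝ, ∀ X Y Z, T X Y Z = α X * dot Y Z - α Y * dot X Z}

/-- 𝒯₂: totally skew-symmetric torsion. -/
def T2 : Set (E → E → E → ℝ) := {T | T ∈ TT ∧ ∀ X Y Z, T X Y Z = -T X Z Y}

/-- 𝒯₃: traceless cyclic torsion. -/
def T3 : Set (E → E → E → ℝ) :=
  {T | T ∈ TT ∧ (∀ X Y Z, T X Y Z + T Y Z X + T Z X Y = 0) ∧
    ∀ X, ∑ i : Fin 5, T X (bas i) (bas i) = 0}

/-- 𝒜₁: vectorial type. -/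
def A1 : Set (E → E → E → ℝ) :=
  {A | A ∈ AA ∧ ∃ α : E →ₗ[ℝ] ℝ, ∀ X Y Z, A X Y Z = α Z * dot X Y - α Y * dot X Z}

/-- 𝒜₂: totally skew-symmetric type. -/
def A2 : Set (E → E → E → ℝ) := {A | A ∈ AA ∧ ∀ X Y Z, A X Y Z = -A Y X Z}

/-- 𝒜₃: traceless cyclic type. -/
def A3 : Set (E → E → E → ℝ) :=
  {A | A ∈ AA ∧ (∀ X Y Z, A X Y Z + A Y Z X + A Z X Y = 0) ∧
    ∀ X, ∑ i : Fin 5, A (bas i) (bas i) X = 0}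

lemma dot_comm (X Y : E) : dot X Y = dot Y X := by
  simp [dot, mul_comm]

lemma dot_add_left (X X' Y : E) : dot (X + X') Y = dot X Y + dot X' Y := by
  simp [dot, add_mul, Finset.sum_add_distrib]

lemma dot_add_right (X Y Y' : E) : dot X (Y + Y') = dot X Y + dot X Y' := by
  simp [dot, mul_add, Finset.sum_add_distrib]

lemma dot_smul_left (r : ℝ) (X Y : E) : dot (r • X) Y = r * dot X Y := by
  simp [dot, Finset.mul_sum, mul_assoc]

lemma dot_smul_right (r : ℝ) (X Y : E) : dot X (r • Y) = r * dot X Y := by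
  simp only [dot, Pi.smul_apply, smul_eq_mul, Finset.mul_sum]
  exact Finset.sum_congr rfl fun i _ => by ring

lemma isTri_tau {A : E → E → E → ℝ} (h : IsTri A) : IsTri (tau A) := by
  obtain ⟨h1, h2, h3, h4, h5, h6⟩ := h
  refine ⟨?_, ?_, ?_, ?_, ?_, ?_⟩ <;> intros <;>
    simp only [tau, h1, h2, h3, h4, h5, h6] <;> ring

lemma isTri_vec (α : E →ₗ[ℝ] ℝ) :
    IsTri (fun X Y Z => α Z * dot X Y - α Y * dot X Z) := by
  refine ⟨?_, ?_, ?_, ?_, ?_, ?_⟩ <;> intros <;>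
    simp only [dot_add_left, dot_add_right, dot_smul_left, dot_smul_right,
      map_add, map_smul, smul_eq_mul] <;> ring

lemma isTri_half {T : E → E → E → ℝ} (h : IsTri T) :
    IsTri (fun X Y Z => T X Y Z / 2) := by
  obtain ⟨h1, h2, h3, h4, h5, h6⟩ := h
  refine ⟨?_, ?_, ?_, ?_, ?_, ?_⟩ <;> intros <;>
    simp only [h1, h2, h3, h4, h5, h6] <;> ring

lemma isTri_cyc {T : E → E → E → ℝ} (h : IsTri T) :
    IsTri (fun X Y Z => T X Y Z + T Z X Y) := by
  obtain ⟨h1, h2, h3, h4, h5, h6⟩ := h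
  refine ⟨?_, ?_, ?_, ?_, ?_, ?_⟩ <;> intros <;>
    simp only [h1, h2, h3, h4, h5, h6] <;> ring

/-- τ maps 𝒜₁ onto 𝒯₁, 𝒜₂ onto 𝒯₂ and 𝒜₃ onto 𝒯₃. -/
theorem stmt8 : tau '' A1 = T1 ∧ tau '' A2 = T2 ∧ tau '' A3 = T3 := by
  refine ⟨?_, ?_, ?_⟩
  · -- A1 onto T1
    ext T
    constructor
    · rintro ⟨A, ⟨⟨hTri, hsk⟩, α, hα⟩, rfl⟩
      refine ⟨⟨isTri_tau hTri, fun X Y Z => by simp only [tau]; ring⟩, α, fun X Y Z => ?_⟩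
      simp only [tau, hα]
      rw [dot_comm Y X]
      ring
    · rintro ⟨⟨hTri, hsk⟩, α, hα⟩
      refine ⟨fun X Y Z => α Z * dot X Y - α Y * dot X Z,
        ⟨⟨isTri_vec α, fun X Y Z => by ring⟩, α, fun _ _ _ => rfl⟩, ?_⟩
      funext X Y Z
      simp only [tau]
      rw [hα X Y Z, dot_comm Y X]
      ring
  · -- A2 onto T2
    ext T
    constructor
    · rintro ⟨A, ⟨⟨hTri, hsk23⟩, hsk12⟩, rfl⟩
      refine ⟨⟨isTri_tau hTri, fun X Y Z => by simp only [tau]; ring⟩, fun X Y Z => ?_⟩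
      have h1 := hsk23 X Y Z
      have h2 := hsk12 Y X Z
      have h3 := hsk23 X Z Y
      have h4 := hsk12 Z X Y
      simp only [tau]
      linarith
    · rintro ⟨⟨hTri, hsk12⟩, hsk23⟩
      refine ⟨fun X Y Z => T X Y Z / 2,
        ⟨⟨isTri_half hTri, fun X Y Z => by dsimp only; rw [hsk23 X Y Z]; ring⟩,
          fun X Y Z => by dsimp only; rw [hsk12 X Y Z]; ring⟩, ?_⟩
      funext X Y Z
      simp only [tau]
      rw [hsk12 Y X Z]
      ring
  · -- A3 onto T3
    ext T
    constructor
    · rintro ⟨A, ⟨⟨hTri, hsk23⟩, hcyc, htr⟩, rfl⟩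
      refine ⟨⟨isTri_tau hTri, fun X Y Z => by simp only [tau]; ring⟩, fun X Y Z => ?_, fun X => ?_⟩
      · have h1 := hcyc X Y Z
        have h2 := hcyc Y X Z
        simp only [tau]
        linarith
      · have key : ∀ i : Fin 5, tau A X (bas i) (bas i)
            = A (bas i) (bas i) X := by
          intro i
          have hz : A X (bas i) (bas i) = 0 := by
            have := hsk23 X (bas i) (bas i); linarith
          have hc := hcyc (bas i) X (bas i)
          simp only [tau]
          linarith
        rw [Finset.sum_congr rfl fun i _ => key i, htr X]
    · rintro ⟨⟨hTri, hsk12⟩, hcyc, htr⟩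
      refine ⟨fun X Y Z => T X Y Z + T Z X Y,
        ⟨⟨isTri_cyc hTri, fun X Y Z => ?_⟩, fun X Y Z => ?_, fun X => ?_⟩, ?_⟩
      · have h1 := hsk12 Y X Z
        have h2 := hsk12 X Z Y
        dsimp only
        linarith
      · have h1 := hcyc X Y Z
        dsimp only
        linarith
      · have key : ∀ i : Fin 5, T (bas i) (bas i) X + T X (bas i) (bas i)
            = T X (bas i) (bas i) := by
          intro i
          have := hsk12 (bas i) (bas i) X
          linarith
        dsimp only
        rw [Finset.sum_congr rfl fun i _ => key i, htr X]
      · funext X Y Z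
        have h1 := hcyc X Y Z
        have h2 := hsk12 Y X Z
        have h3 := hsk12 Z Y X
        simp only [tau]
        linarith
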